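/- Let Ω̄ ⊂ ℝ^d be compact and connected, and v_1,…,v_N : Ω̄ → S^{d-1} continuous. Assume the controlled decomposition hypothesis: there exists C > 0 such that for every x ∈ Ω̄, z ∈ S^{d-1}, and ξ ∈ ℝ_+^N, there is a minimizer Z̄ of Z ↦ Z·ξ over {Z ∈ ℝ_+^N : Σ_k Z_k v_k(x) = z} with |Z̄| ≤ C. Then for every subset I ⊆ {1,…,N}, exactly one of the following holds: (a) 0 ∈ Conv({v_i(x)}_{i∈I}) for every x ∈ Ω̄, or (b) 0 ∉ Conv({v_i(x)}_{i∈I}) for every x ∈ Ω̄. -/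

import Mathlib

open scoped BigOperators



lemma aux_mem_hull_of_weights {d N : ℕ}
    (v : Fin N → EuclideanSpace ℝ (Fin d) → EuclideanSpace ℝ (Fin d))
    (x : EuclideanSpace ℝ (Fin d)) (I : Finset (Fin N)) (W : Fin N → ℝ)
    (h0 : ∀ k, 0 ≤ W k) (hsupp : ∀ k ∉ I, W k = 0)
    (hpos : 0 < ∑ k, W k)
    (hcombo : ∑ k, W k • v k x = 0) :
    (0 : EuclideanSpace ℝ (Fin d)) ∈ convexHull ℝ {w | ∃ i ∈ I, w = v i x} := by
  have hsum1 : ∑ i ∈ I, W i = ∑ k, W k :=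
    Finset.sum_subset (Finset.subset_univ I) (fun k _ hk => hsupp k hk)
  have hsum2 : ∑ i ∈ I, W i • v i x = ∑ k, W k • v k x :=
    Finset.sum_subset (Finset.subset_univ I)
      (fun k _ hk => by rw [hsupp k hk, zero_smul])
  have hc : I.centerMass W (fun i => v i x) = 0 := by
    rw [Finset.centerMass, hsum2, hcombo, smul_zero]
  rw [← hc]
  exact Finset.centerMass_mem_convexHull I (fun i _ => h0 i) (hsum1 ▸ hpos)
    (fun i hi => ⟨i, hi, rfl⟩)


lemma aux_weights_of_mem_hull {d N : ℕ}
    (v : Fin N → EuclideanSpace ℝ (Fin d) → EuclideanSpace ℝ (Fin d))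
    (x : EuclideanSpace ℝ (Fin d)) (I : Finset (Fin N)) (hI : I.Nonempty)
    (h : (0 : EuclideanSpace ℝ (Fin d)) ∈ convexHull ℝ {w | ∃ i ∈ I, w = v i x}) :
    ∃ lam : Fin N → ℝ, (∀ k, 0 ≤ lam k) ∧ (∀ k ∉ I, lam k = 0) ∧
      (∑ k, lam k = 1) ∧ (∑ k, lam k • v k x = 0) := by
  classical
  set F : Finset (EuclideanSpace ℝ (Fin d)) := I.image (fun i => v i x) with hF
  have hset : {w | ∃ i ∈ I, w = v i x} = (F : Set (EuclideanSpace ℝ (Fin d))) := by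
    ext w
    simp only [Set.mem_setOf_eq, hF, Finset.coe_image, Set.mem_image, Finset.mem_coe]
    constructor
    · rintro ⟨i, hi, rfl⟩; exact ⟨i, hi, rfl⟩
    · rintro ⟨i, hi, rfl⟩; exact ⟨i, hi, rfl⟩
  rw [hset, Finset.convexHull_eq] at h
  obtain ⟨w, hw0, hw1, hwc⟩ := h
  -- center of mass equals the plain sum since weights sum to 1
  have hcm : ∑ y ∈ F, w y • y = 0 := by
    have := hwc
    rw [Finset.centerMass, hw1, inv_one, one_smul] at this
    simpa using this
  -- choose a representative index for each point
  have hrep : ∀ y ∈ F, ∃ i, i ∈ I ∧ v i x = y := by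
    intro y hy
    obtain ⟨i, hi, hiy⟩ := Finset.mem_image.mp hy
    exact ⟨i, hi, hiy⟩
  let φ : EuclideanSpace ℝ (Fin d) → Fin N := fun y =>
    if h : ∃ i, i ∈ I ∧ v i x = y then h.choose else hI.choose
  have hφI : ∀ y ∈ F, φ y ∈ I := by
    intro y hy
    have hex := hrep y hy
    simp only [φ, dif_pos hex]
    exact hex.choose_spec.1
  have hφv : ∀ y ∈ F, v (φ y) x = y := by
    intro y hy
    have hex := hrep y hy
    simp only [φ, dif_pos hex]
    exact hex.choose_spec.2
  refine ⟨fun k => ∑ y ∈ F, if φ y = k then w y else 0, ?_, ?_, ?_, ?_⟩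
  · intro k
    exact Finset.sum_nonneg fun y hy => by
      by_cases hc : φ y = k <;> simp [hc, hw0 y hy]
  · intro k hk
    refine Finset.sum_eq_zero fun y hy => ?_
    have : φ y ≠ k := fun hc => hk (hc ▸ hφI y hy)
    simp [this]
  · rw [Finset.sum_comm, ← hw1]
    refine Finset.sum_congr rfl fun y hy => ?_
    rw [Finset.sum_ite_eq Finset.univ (φ y) (fun _ => w y)]
    simp
  · have h1 : ∀ k, (∑ y ∈ F, if φ y = k then w y else 0) • v k x
        = ∑ y ∈ F, (if φ y = k then w y • v k x else 0) := by
      intro k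
      rw [Finset.sum_smul]
      refine Finset.sum_congr rfl fun y hy => ?_
      by_cases hc : φ y = k <;> simp [hc]
    calc ∑ k, (fun k => ∑ y ∈ F, if φ y = k then w y else 0) k • v k x
        = ∑ k, ∑ y ∈ F, (if φ y = k then w y • v k x else 0) := by
          exact Finset.sum_congr rfl fun k _ => h1 k
      _ = ∑ y ∈ F, ∑ k, (if φ y = k then w y • v k x else 0) := Finset.sum_comm
      _ = ∑ y ∈ F, w y • y := by
          refine Finset.sum_congr rfl fun y hy => ?_
          rw [Finset.sum_ite_eq Finset.univ (φ y) (fun k => w y • v k x)]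
          simp [hφv y hy]
      _ = 0 := hcm

lemma aux_transfer {d N : ℕ} {C : ℝ}
    (v : Fin N → EuclideanSpace ℝ (Fin d) → EuclideanSpace ℝ (Fin d))
    (I : Finset (Fin N)) (x y : EuclideanSpace ℝ (Fin d)) (hC : 0 < C)
    (hctrly : ∀ z : EuclideanSpace ℝ (Fin d), ‖z‖ = 1 →
      ∀ ξ' : Fin N → ℝ, (∀ k, 0 ≤ ξ' k) →
        ∃ Z : Fin N → ℝ, (∀ k, 0 ≤ Z k) ∧ (∑ k, Z k • v k y = z) ∧
          (∀ Z' : Fin N → ℝ, (∀ k, 0 ≤ Z' k) → ∑ k, Z' k • v k y = z →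
            ∑ k, Z k * ξ' k ≤ ∑ k, Z' k * ξ' k) ∧ (∑ k, Z k ≤ C))
    (lam : Fin N → ℝ) (hl0 : ∀ k, 0 ≤ lam k) (hlsupp : ∀ k ∉ I, lam k = 0)
    (hlsum : ∑ k, lam k = 1) (hlx : ∑ k, lam k • v k x = 0)
    (c₁ : ℝ) (hc₁ : 0 < c₁) (hc₁le : ∀ k, lam k = 0 ∨ c₁ ≤ lam k)
    (hnear : ∀ k, ‖v k y - v k x‖ ≤ c₁ / (2 * C)) :
    (0 : EuclideanSpace ℝ (Fin d)) ∈ convexHull ℝ {w | ∃ i ∈ I, w = v i y} := by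
  classical
  have hc₁1 : c₁ ≤ 1 := by
    obtain ⟨k₀, hk₀⟩ : ∃ k, lam k ≠ 0 := by
      by_contra hcon
      push_neg at hcon
      rw [Finset.sum_eq_zero (fun k _ => hcon k)] at hlsum
      norm_num at hlsum
    have h1 : c₁ ≤ lam k₀ := (hc₁le k₀).resolve_left hk₀
    have h2 : lam k₀ ≤ ∑ k, lam k :=
      Finset.single_le_sum (fun k _ => hl0 k) (Finset.mem_univ k₀)
    linarith [hlsum ▸ h2]
  set h : EuclideanSpace ℝ (Fin d) := ∑ k, lam k • v k y with hh
  have hhnorm : ‖h‖ ≤ c₁ / (2 * C) := by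
    have hrw : h = ∑ k, lam k • (v k y - v k x) := by
      rw [hh]
      rw [Finset.sum_congr rfl (fun k _ => smul_sub (lam k) (v k y) (v k x))]
      rw [Finset.sum_sub_distrib, hlx, sub_zero]
    rw [hrw]
    calc ‖∑ k, lam k • (v k y - v k x)‖ ≤ ∑ k, ‖lam k • (v k y - v k x)‖ :=
          norm_sum_le _ _
      _ ≤ ∑ k, lam k * (c₁ / (2 * C)) := by
          refine Finset.sum_le_sum fun k _ => ?_
          rw [norm_smul, Real.norm_eq_abs, abs_of_nonneg (hl0 k)]
          exact mul_le_mul_of_nonneg_left (hnear k) (hl0 k)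
      _ = c₁ / (2 * C) := by rw [← Finset.sum_mul, hlsum, one_mul]
  by_cases hz : h = 0
  · exact aux_mem_hull_of_weights v y I lam hl0 hlsupp (by rw [hlsum]; norm_num)
      (hh ▸ hz)
  · have hnpos : 0 < ‖h‖ := norm_pos_iff.mpr hz
    set zh : EuclideanSpace ℝ (Fin d) := ‖h‖⁻¹ • h with hzh
    have hzunit : ‖zh‖ = 1 := by
      rw [hzh, norm_smul, norm_inv, norm_norm, inv_mul_cancel₀ (ne_of_gt hnpos)]
    set ξ : Fin N → ℝ := fun k => if lam k = 0 then 1 else 0 with hξ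
    have hξ0 : ∀ k, 0 ≤ ξ k := by
      intro k; by_cases hc : lam k = 0 <;> simp [hξ, hc]
    obtain ⟨Z, hZ0, hZsum, hZmin, hZC⟩ := hctrly zh hzunit ξ hξ0
    -- competitor
    have hcomp : ∑ k, (‖h‖⁻¹ * lam k) • v k y = zh := by
      rw [hzh]
      rw [Finset.sum_congr rfl (fun k _ => mul_smul (‖h‖⁻¹) (lam k) (v k y))]
      rw [← Finset.smul_sum, ← hh]
    have hmin := hZmin (fun k => ‖h‖⁻¹ * lam k)
      (fun k => mul_nonneg (inv_nonneg.mpr (le_of_lt hnpos)) (hl0 k)) hcomp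
    have hrhs : ∑ k, (‖h‖⁻¹ * lam k) * ξ k = 0 := by
      refine Finset.sum_eq_zero fun k _ => ?_
      by_cases hc : lam k = 0 <;> simp [hξ, hc]
    rw [hrhs] at hmin
    have hzero : ∀ k, lam k = 0 → Z k = 0 := by
      intro k hk
      have hterms : ∀ j ∈ Finset.univ, 0 ≤ Z j * ξ j :=
        fun j _ => mul_nonneg (hZ0 j) (hξ0 j)
      have hsum0 : ∑ j, Z j * ξ j = 0 :=
        le_antisymm hmin (Finset.sum_nonneg hterms)
      have := (Finset.sum_eq_zero_iff_of_nonneg hterms).mp hsum0 k (Finset.mem_univ k)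
      rw [hξ] at this
      simpa [hk] using this
    have hZk : ∀ k, Z k ≤ C :=
      fun k => le_trans (Finset.single_le_sum (fun j _ => hZ0 j) (Finset.mem_univ k)) hZC
    have hkey : ∀ k, ‖h‖ * Z k ≤ c₁ / 2 := by
      intro k
      calc ‖h‖ * Z k ≤ (c₁ / (2 * C)) * C := by
            exact mul_le_mul hhnorm (hZk k) (hZ0 k) (by positivity)
        _ = c₁ / 2 := by field_simp
    refine aux_mem_hull_of_weights v y I (fun k => lam k - ‖h‖ * Z k) ?_ ?_ ?_ ?_
    · intro k
      show 0 ≤ lam k - ‖h‖ * Z k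
      rcases hc₁le k with hk | hk
      · rw [hk, hzero k hk, mul_zero, sub_zero]
      · have := hkey k
        linarith
    · intro k hk
      show lam k - ‖h‖ * Z k = 0
      have hlk := hlsupp k hk
      rw [hlk, hzero k hlk, mul_zero, sub_zero]
    · have hs : ∑ k, (lam k - ‖h‖ * Z k) = 1 - ‖h‖ * ∑ k, Z k := by
        rw [Finset.sum_sub_distrib, hlsum, Finset.mul_sum]
      rw [hs]
      have : ‖h‖ * ∑ k, Z k ≤ c₁ / 2 := by
        calc ‖h‖ * ∑ k, Z k ≤ (c₁ / (2 * C)) * C :=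
              mul_le_mul hhnorm hZC (Finset.sum_nonneg fun k _ => hZ0 k) (by positivity)
          _ = c₁ / 2 := by field_simp
      linarith
    · have hsplit : ∀ k, (lam k - ‖h‖ * Z k) • v k y
          = lam k • v k y - ‖h‖ • (Z k • v k y) := by
        intro k
        rw [sub_smul, mul_smul]
      rw [Finset.sum_congr rfl (fun k _ => hsplit k), Finset.sum_sub_distrib,
        ← Finset.smul_sum, hZsum, hzh, smul_smul, mul_inv_cancel₀ (ne_of_gt hnpos),
        one_smul, ← hh, sub_self]


lemma aux_sep {d N : ℕ}
    (v : Fin N → EuclideanSpace ℝ (Fin d) → EuclideanSpace ℝ (Fin d))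
    (I : Finset (Fin N)) (x : EuclideanSpace ℝ (Fin d))
    (hx : (0 : EuclideanSpace ℝ (Fin d)) ∉ convexHull ℝ {w | ∃ i ∈ I, w = v i x}) :
    ∃ ε > 0, ∀ y : EuclideanSpace ℝ (Fin d), (∀ k, ‖v k y - v k x‖ ≤ ε) →
      (0 : EuclideanSpace ℝ (Fin d)) ∉ convexHull ℝ {w | ∃ i ∈ I, w = v i y} := by
  classical
  by_cases hI : I.Nonempty
  · have hfin : ({w | ∃ i ∈ I, w = v i x} :
        Set (EuclideanSpace ℝ (Fin d))).Finite := by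
      have : {w | ∃ i ∈ I, w = v i x} = (fun i => v i x) '' (I : Set (Fin N)) := by
        ext w
        simp only [Set.mem_setOf_eq, Set.mem_image, Finset.mem_coe]
        constructor
        · rintro ⟨i, hi, rfl⟩; exact ⟨i, hi, rfl⟩
        · rintro ⟨i, hi, rfl⟩; exact ⟨i, hi, rfl⟩
      rw [this]
      exact (I.finite_toSet).image _
    have hclosed : IsClosed (convexHull ℝ {w | ∃ i ∈ I, w = v i x}) :=
      (hfin.isCompact_convexHull (𝕜 := ℝ)).isClosed
    obtain ⟨f, u, hfu, hb⟩ := geometric_hahn_banach_point_closed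
      (convex_convexHull ℝ _) hclosed hx
    have hbi : ∀ i ∈ I, u < f (v i x) := fun i hi =>
      hb _ (subset_convexHull ℝ _ ⟨i, hi, rfl⟩)
    set m : ℝ := (I.image fun i => f (v i x)).min' (hI.image _) - u with hm
    have hmpos : 0 < m := by
      obtain ⟨j, hj, heq⟩ := Finset.mem_image.mp
        ((I.image fun i => f (v i x)).min'_mem (hI.image _))
      rw [hm, ← heq]
      linarith [hbi j hj]
    refine ⟨m / (2 * (‖f‖ + 1)), by positivity, fun y hy hmem => ?_⟩
    have hS : {w | ∃ i ∈ I, w = v i y} ⊆ {w | u ≤ f w} := by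
      rintro w ⟨i, hi, rfl⟩
      have h1 : u + m ≤ f (v i x) := by
        have := (I.image fun i => f (v i x)).min'_le (f (v i x))
          (Finset.mem_image_of_mem _ hi)
        rw [hm]; linarith
      have h2 : |f (v i y) - f (v i x)| ≤ ‖f‖ * (m / (2 * (‖f‖ + 1))) := by
        calc |f (v i y) - f (v i x)| = ‖f (v i y - v i x)‖ := by
              rw [map_sub]; rfl
          _ ≤ ‖f‖ * ‖v i y - v i x‖ := f.le_opNorm _
          _ ≤ ‖f‖ * (m / (2 * (‖f‖ + 1))) :=
              mul_le_mul_of_nonneg_left (hy i) (norm_nonneg f)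
      have h3 : ‖f‖ * (m / (2 * (‖f‖ + 1))) < m := by
        have hf1 : ‖f‖ < ‖f‖ + 1 := by linarith
        have h4 : ‖f‖ * (m / (2 * (‖f‖ + 1))) < (‖f‖ + 1) * (m / (‖f‖ + 1)) := by
          have : m / (2 * (‖f‖ + 1)) < m / (‖f‖ + 1) := by
            apply div_lt_div_of_pos_left hmpos (by positivity)
            nlinarith [norm_nonneg f]
          nlinarith [norm_nonneg f, hmpos, div_pos hmpos (by positivity : (0:ℝ) < 2 * (‖f‖ + 1))]
        have h5 : (‖f‖ + 1) * (m / (‖f‖ + 1)) = m := by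
          field_simp
        linarith
      have := abs_sub_abs_le_abs_sub (f (v i y)) (f (v i x))
      have h6 : f (v i x) - f (v i y) ≤ |f (v i y) - f (v i x)| := by
        rw [abs_sub_comm]; exact le_abs_self _
      show u ≤ f (v i y)
      linarith
    have hH : Convex ℝ {w : EuclideanSpace ℝ (Fin d) | u ≤ f w} := by
      intro w₁ h₁ w₂ h₂ a b ha hb hab
      simp only [Set.mem_setOf_eq] at *
      have : f (a • w₁ + b • w₂) = a * f w₁ + b * f w₂ := by
        rw [map_add, map_smul, map_smul]; rfl
      rw [this]
      have k₁ : a * u ≤ a * f w₁ := mul_le_mul_of_nonneg_left h₁ ha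
      have k₂ : b * u ≤ b * f w₂ := mul_le_mul_of_nonneg_left h₂ hb
      have k₃ : a * u + b * u = u := by rw [← add_mul, hab, one_mul]
      linarith
    have := convexHull_min hS hH hmem
    simp only [Set.mem_setOf_eq, map_zero] at this
    have hf0 : f (0 : EuclideanSpace ℝ (Fin d)) = 0 := map_zero f
    rw [hf0] at hfu
    linarith
  · refine ⟨1, one_pos, fun y hy hmem => ?_⟩
    rw [Finset.not_nonempty_iff_eq_empty] at hI
    subst hI
    have : {w : EuclideanSpace ℝ (Fin d) | ∃ i ∈ (∅ : Finset (Fin N)), w = v i y} = ∅ := by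
      ext w; simp
    rw [this, convexHull_empty] at hmem
    exact hmem



lemma aux_nbhd {d N : ℕ}
    (K : Set (EuclideanSpace ℝ (Fin d)))
    (v : Fin N → EuclideanSpace ℝ (Fin d) → EuclideanSpace ℝ (Fin d))
    (hv_cont : ∀ k, ContinuousOn (v k) K)
    (x : EuclideanSpace ℝ (Fin d)) (hx : x ∈ K) (ε : ℝ) (hε : 0 < ε) :
    ∃ O : Set (EuclideanSpace ℝ (Fin d)),
      IsOpen O ∧ x ∈ O ∧ ∀ y ∈ O ∩ K, ∀ k, ‖v k y - v k x‖ ≤ ε := by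
  classical
  have h1 : ∀ k : Fin N, ∃ δ : ℝ, 0 < δ ∧ ∀ y ∈ K, dist y x < δ →
      dist (v k y) (v k x) < ε := by
    intro k
    have ht := hv_cont k x hx
    rw [Metric.continuousWithinAt_iff] at ht
    obtain ⟨δ, hδ, hd⟩ := ht ε hε
    exact ⟨δ, hδ, fun y hy hyd => hd hy hyd⟩
  choose δ hδpos hδ using h1
  set r : ℝ := (insert (1:ℝ) (Finset.univ.image δ)).min' (by simp) with hr
  have hrpos : 0 < r := by
    have := (insert (1:ℝ) (Finset.univ.image δ)).min'_mem (by simp)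
    rw [← hr] at this
    rcases Finset.mem_insert.mp this with h | h
    · rw [h]; norm_num
    · obtain ⟨k, _, hk⟩ := Finset.mem_image.mp h
      rw [← hk]; exact hδpos k
  refine ⟨Metric.ball x r, Metric.isOpen_ball, Metric.mem_ball_self hrpos,
    fun y hy k => ?_⟩
  have hrk : r ≤ δ k :=
    Finset.min'_le _ _ (Finset.mem_insert_of_mem
      (Finset.mem_image_of_mem δ (Finset.mem_univ k)))
  have hdy : dist y x < δ k := lt_of_lt_of_le (Metric.mem_ball.mp hy.1) hrk
  have := hδ k y hy.2 hdy
  rw [dist_eq_norm] at this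
  exact le_of_lt this

lemma aux_stepP {d N : ℕ} {C : ℝ}
    (K : Set (EuclideanSpace ℝ (Fin d)))
    (v : Fin N → EuclideanSpace ℝ (Fin d) → EuclideanSpace ℝ (Fin d))
    (hv_cont : ∀ k, ContinuousOn (v k) K)
    (hC : 0 < C)
    (hctrl : ∀ x ∈ K, ∀ z : EuclideanSpace ℝ (Fin d), ‖z‖ = 1 →
      ∀ ξ' : Fin N → ℝ, (∀ k, 0 ≤ ξ' k) →
        ∃ Z : Fin N → ℝ, (∀ k, 0 ≤ Z k) ∧ (∑ k, Z k • v k x = z) ∧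
          (∀ Z' : Fin N → ℝ, (∀ k, 0 ≤ Z' k) → ∑ k, Z' k • v k x = z →
            ∑ k, Z k * ξ' k ≤ ∑ k, Z' k * ξ' k) ∧ (∑ k, Z k ≤ C))
    (I : Finset (Fin N)) (x : EuclideanSpace ℝ (Fin d)) (hx : x ∈ K)
    (hmem : (0 : EuclideanSpace ℝ (Fin d)) ∈ convexHull ℝ {w | ∃ i ∈ I, w = v i x}) :
    ∃ O : Set (EuclideanSpace ℝ (Fin d)), IsOpen O ∧ x ∈ O ∧ ∀ y ∈ O ∩ K,
      (0 : EuclideanSpace ℝ (Fin d)) ∈ convexHull ℝ {w | ∃ i ∈ I, w = v i y} := by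
  classical
  have hI : I.Nonempty := by
    rcases Finset.eq_empty_or_nonempty I with rfl | h
    · exfalso
      have hE : {w : EuclideanSpace ℝ (Fin d) |
          ∃ i ∈ (∅ : Finset (Fin N)), w = v i x} = ∅ := by ext w; simp
      rw [hE, convexHull_empty] at hmem
      exact hmem
    · exact h
  obtain ⟨lam, hl0, hlsupp, hlsum, hlx⟩ := aux_weights_of_mem_hull v x I hI hmem
  set J := Finset.univ.filter (fun k => lam k ≠ 0) with hJ
  have hJne : J.Nonempty := by
    by_contra hcon
    rw [Finset.not_nonempty_iff_eq_empty] at hcon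
    have hall : ∀ k, lam k = 0 := by
      intro k
      by_contra hk
      have hkJ : k ∈ J := by simp [hJ, hk]
      rw [hcon] at hkJ
      simp at hkJ
    rw [Finset.sum_eq_zero (fun k _ => hall k)] at hlsum
    norm_num at hlsum
  set c₁ := (J.image lam).min' (hJne.image lam) with hc₁def
  have hc₁pos : 0 < c₁ := by
    obtain ⟨j, hj, heq⟩ := Finset.mem_image.mp ((J.image lam).min'_mem (hJne.image lam))
    have hjne : lam j ≠ 0 := (Finset.mem_filter.mp hj).2
    rw [hc₁def, ← heq]
    exact lt_of_le_of_ne (hl0 j) (Ne.symm hjne)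
  have hc₁le : ∀ k, lam k = 0 ∨ c₁ ≤ lam k := by
    intro k
    by_cases hk : lam k = 0
    · exact Or.inl hk
    · exact Or.inr (Finset.min'_le _ _ (Finset.mem_image_of_mem lam (by simp [hJ, hk])))
  obtain ⟨O, hO, hxO, hOn⟩ := aux_nbhd K v hv_cont x hx (c₁ / (2 * C)) (by positivity)
  refine ⟨O, hO, hxO, fun y hy => ?_⟩
  exact aux_transfer v I x y hC (fun z hz ξ hξ => hctrl y hy.2 z hz ξ hξ)
    lam hl0 hlsupp hlsum hlx c₁ hc₁pos hc₁le (hOn y hy)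

lemma aux_stepN {d N : ℕ}
    (K : Set (EuclideanSpace ℝ (Fin d)))
    (v : Fin N → EuclideanSpace ℝ (Fin d) → EuclideanSpace ℝ (Fin d))
    (hv_cont : ∀ k, ContinuousOn (v k) K)
    (I : Finset (Fin N)) (x : EuclideanSpace ℝ (Fin d)) (hx : x ∈ K)
    (hnm : (0 : EuclideanSpace ℝ (Fin d)) ∉ convexHull ℝ {w | ∃ i ∈ I, w = v i x}) :
    ∃ O : Set (EuclideanSpace ℝ (Fin d)), IsOpen O ∧ x ∈ O ∧ ∀ y ∈ O ∩ K,
      (0 : EuclideanSpace ℝ (Fin d)) ∉ convexHull ℝ {w | ∃ i ∈ I, w = v i y} := by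
  obtain ⟨ε, hε, hsep⟩ := aux_sep v I x hnm
  obtain ⟨O, hO, hxO, hOn⟩ := aux_nbhd K v hv_cont x hx ε hε
  exact ⟨O, hO, hxO, fun y hy => hsep y (hOn y hy)⟩


/-- the 'all or nothing' dichotomy. For every subset `I` of directions,
either `0` lies in the convex hull of `{v_i(x)}_{i∈I}` for every `x ∈ Ω̄`, or for no
`x ∈ Ω̄`. -/
theorem stmt_4 (d N : ℕ)
    (K : Set (EuclideanSpace ℝ (Fin d))) (hKcomp : IsCompact K) (hKconn : IsConnected K)
    (v : Fin N → EuclideanSpace ℝ (Fin d) → EuclideanSpace ℝ (Fin d))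
    (hv_cont : ∀ k, ContinuousOn (v k) K)
    (hv_unit : ∀ k, ∀ x ∈ K, ‖v k x‖ = 1)
    -- controlled decomposition hypothesis
    (hctrl : ∃ C : ℝ, 0 < C ∧ ∀ x ∈ K, ∀ z : EuclideanSpace ℝ (Fin d), ‖z‖ = 1 →
      ∀ ξ' : Fin N → ℝ, (∀ k, 0 ≤ ξ' k) →
        ∃ Z : Fin N → ℝ, (∀ k, 0 ≤ Z k) ∧ (∑ k, Z k • v k x = z) ∧
          (∀ Z' : Fin N → ℝ, (∀ k, 0 ≤ Z' k) → ∑ k, Z' k • v k x = z →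
            ∑ k, Z k * ξ' k ≤ ∑ k, Z' k * ξ' k) ∧ (∑ k, Z k ≤ C)) :
    ∀ I : Finset (Fin N),
      Xor' (∀ x ∈ K, (0 : EuclideanSpace ℝ (Fin d)) ∈
              convexHull ℝ {w | ∃ i ∈ I, w = v i x})
           (∀ x ∈ K, (0 : EuclideanSpace ℝ (Fin d)) ∉
              convexHull ℝ {w | ∃ i ∈ I, w = v i x}) := by
  classical
  obtain ⟨C, hC, hctrl⟩ := hctrl
  intro I
  obtain ⟨x₀, hx₀⟩ := hKconn.nonempty
  set U : Set (EuclideanSpace ℝ (Fin d)) := ⋃₀ {O | IsOpen O ∧ ∀ y ∈ O ∩ K,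
    (0 : EuclideanSpace ℝ (Fin d)) ∈ convexHull ℝ {w | ∃ i ∈ I, w = v i y}} with hUdef
  set V : Set (EuclideanSpace ℝ (Fin d)) := ⋃₀ {O | IsOpen O ∧ ∀ y ∈ O ∩ K,
    (0 : EuclideanSpace ℝ (Fin d)) ∉ convexHull ℝ {w | ∃ i ∈ I, w = v i y}} with hVdef
  have hU : IsOpen U := isOpen_sUnion (fun O hO => hO.1)
  have hV : IsOpen V := isOpen_sUnion (fun O hO => hO.1)
  have hUP : ∀ y ∈ K ∩ U,
      (0 : EuclideanSpace ℝ (Fin d)) ∈ convexHull ℝ {w | ∃ i ∈ I, w = v i y} := by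
    rintro y ⟨hyK, hyU⟩
    obtain ⟨O, hO, hyO⟩ := hyU
    exact hO.2 y ⟨hyO, hyK⟩
  have hVN : ∀ y ∈ K ∩ V,
      (0 : EuclideanSpace ℝ (Fin d)) ∉ convexHull ℝ {w | ∃ i ∈ I, w = v i y} := by
    rintro y ⟨hyK, hyV⟩
    obtain ⟨O, hO, hyO⟩ := hyV
    exact hO.2 y ⟨hyO, hyK⟩
  have hcover : K ⊆ U ∪ V := by
    intro x hx
    by_cases hmem : (0 : EuclideanSpace ℝ (Fin d)) ∈ convexHull ℝ {w | ∃ i ∈ I, w = v i x}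
    · obtain ⟨O, hO, hxO, hOP⟩ := aux_stepP K v hv_cont hC hctrl I x hx hmem
      exact Or.inl ⟨O, ⟨hO, hOP⟩, hxO⟩
    · obtain ⟨O, hO, hxO, hON⟩ := aux_stepN K v hv_cont I x hx hmem
      exact Or.inr ⟨O, ⟨hO, hON⟩, hxO⟩
  have hdisj : ¬(K ∩ (U ∩ V)).Nonempty := by
    rintro ⟨y, hyK, hyU, hyV⟩
    exact hVN y ⟨hyK, hyV⟩ (hUP y ⟨hyK, hyU⟩)
  have halt : ¬(K ∩ U).Nonempty ∨ ¬(K ∩ V).Nonempty := by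
    by_contra hcon
    push_neg at hcon
    exact hdisj (hKconn.isPreconnected U V hU hV hcover hcon.1 hcon.2)
  rcases halt with hE | hE
  · have hall : ∀ x ∈ K, (0 : EuclideanSpace ℝ (Fin d)) ∉
        convexHull ℝ {w | ∃ i ∈ I, w = v i x} := by
      intro x hx
      rcases hcover hx with hU' | hV'
      · exact absurd ⟨x, hx, hU'⟩ hE
      · exact hVN x ⟨hx, hV'⟩
    exact Or.inr ⟨hall, fun hforall => (hall x₀ hx₀) (hforall x₀ hx₀)⟩
  · have hall : ∀ x ∈ K, (0 : EuclideanSpace ℝ (Fin d)) ∈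
        convexHull ℝ {w | ∃ i ∈ I, w = v i x} := by
      intro x hx
      rcases hcover hx with hU' | hV'
      · exact hUP x ⟨hx, hU'⟩
      · exact absurd ⟨x, hx, hV'⟩ hE
    exact Or.inl ⟨hall, fun hforall => (hforall x₀ hx₀) (hall x₀ hx₀)⟩
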